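/- arXiv:2011.05234 — 2 statements merged into one kernel-verified Lean document; each statement's English description precedes it below -/
import Mathlib

section
/- Let F be the free group on a finite set S, let f : F → Sym(n−1) and g : F → Sym(n) be homomorphisms with g transitive, and let D = {(x,x) : x ∈ [n−1]} ⊆ [n−1]×[n] be the diagonal. Then for every orbit X of the product action of F on [n−1]×[n], |D ∩ X| ≤ |X|/2. -/
private lemma fiber_bound {α β : Type*} [Fintype α] [Fintype β] (s : Set (α × β))
    (h : ∀ a ∈ Prod.fst '' s, 2 ≤ Set.ncard {b | (a, b) ∈ s}) :
    2 * (Prod.fst '' s).ncard ≤ s.ncard := by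
  classical
  rw [Set.ncard_eq_toFinset_card', Set.ncard_eq_toFinset_card']
  have himg : (Prod.fst '' s).toFinset = s.toFinset.image Prod.fst := by
    ext a; simp
  rw [himg]
  rw [Finset.card_eq_sum_card_fiberwise (f := Prod.fst)
      (fun p hp => Finset.mem_image_of_mem _ hp)]
  rw [mul_comm]
  have := Finset.card_nsmul_le_sum (s.toFinset.image Prod.fst)
      (fun a => (s.toFinset.filter (fun p => p.1 = a)).card) 2 ?_
  · simpa [smul_eq_mul] using this
  · intro a ha
    obtain ⟨p, hp, rfl⟩ := Finset.mem_image.1 ha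
    have h2 := h p.1 ⟨p, by simpa using hp, rfl⟩
    rw [Set.ncard_eq_toFinset_card'] at h2
    refine le_trans h2 (Finset.card_le_card_of_injOn (fun b => (p.1, b)) ?_ ?_)
    · intro b hb
      simp only [Finset.mem_coe, Set.mem_toFinset, Set.mem_setOf_eq] at hb
      simp [hb]
    · intro b _ b' _ hbb
      exact congrArg Prod.snd hbb

/-- Let `f : F_S →* Sym(n-1)`, `g : F_S →* Sym(n)` with `g` transitive, and let
`D` be the diagonal in `[n-1] × [n]`. For every orbit `X` of the product action
(the orbit of any point `p₀`), we have `|D ∩ X| ≤ |X| / 2`. -/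
theorem stmt_6 {S : Type*} [Fintype S] {n : ℕ}
    (f : FreeGroup S →* Equiv.Perm (Fin (n - 1)))
    (g : FreeGroup S →* Equiv.Perm (Fin n))
    (hg : ∀ y y' : Fin n, ∃ w : FreeGroup S, g w y = y')
    (p₀ : Fin (n - 1) × Fin n) :
    2 * Set.ncard {p : Fin (n - 1) × Fin n |
        (∃ w : FreeGroup S, (f w p₀.1, g w p₀.2) = p) ∧
          Fin.castLE (Nat.sub_le n 1) p.1 = p.2}
      ≤ Set.ncard {p : Fin (n - 1) × Fin n |
          ∃ w : FreeGroup S, (f w p₀.1, g w p₀.2) = p} := by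
  classical
  set X : Set (Fin (n - 1) × Fin n) :=
    {p | ∃ w : FreeGroup S, (f w p₀.1, g w p₀.2) = p} with hXdef
  set D : Set (Fin (n - 1) × Fin n) :=
    {p | (∃ w : FreeGroup S, (f w p₀.1, g w p₀.2) = p) ∧
        Fin.castLE (Nat.sub_le n 1) p.1 = p.2} with hDdef
  rcases D.eq_empty_or_nonempty with hD | ⟨⟨x, x'⟩, ⟨⟨w₀, hw₀⟩, hdiag⟩⟩
  · simp [hD]
  -- the orbit of (x, x') is X
  have hx1 : f w₀ p₀.1 = x := congrArg Prod.fst hw₀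
  have hx2 : g w₀ p₀.2 = x' := congrArg Prod.snd hw₀
  have hXeq : ∀ p, p ∈ X ↔ ∃ w : FreeGroup S, (f w x, g w x') = p := by
    intro p
    constructor
    · rintro ⟨v, rfl⟩
      refine ⟨v * w₀⁻¹, ?_⟩
      simp [map_mul, map_inv, ← hx1, ← hx2]
    · rintro ⟨v, rfl⟩
      exact ⟨v * w₀, by simp [map_mul, hx1, hx2]⟩
  -- key step: some w fixes x under f but moves x' under g
  have key : ∃ w : FreeGroup S, f w x = x ∧ g w x' ≠ x' := by
    by_contra hcon
    push_neg at hcon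
    have hinj : Set.InjOn Prod.fst X := by
      rintro p hp q hq hpq
      rw [hXeq] at hp hq
      obtain ⟨u, rfl⟩ := hp
      obtain ⟨v, rfl⟩ := hq
      simp only [Prod.fst] at hpq
      have : f (v⁻¹ * u) x = x := by simp [map_mul, map_inv, hpq]
      have h2 := hcon _ this
      have : g u x' = g v x' := by
        have := congrArg (g v) h2
        simpa [map_mul, map_inv] using this
      simp [hpq, this]
    have hsurj : Prod.snd '' X = Set.univ := by
      ext b
      simp only [Set.mem_univ, iff_true, Set.mem_image]
      obtain ⟨w, hw⟩ := hg x' b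
      exact ⟨(f w x, g w x'), (hXeq _).2 ⟨w, rfl⟩, hw⟩
    have h1 : (n : ℕ) ≤ X.ncard := by
      have : (Set.univ : Set (Fin n)).ncard ≤ X.ncard := by
        rw [← hsurj]
        exact le_trans (Set.ncard_image_le X.toFinite) le_rfl
      simpa [Set.ncard_univ] using this
    have h2 : X.ncard ≤ n - 1 := by
      rw [← Set.ncard_image_of_injOn hinj]
      have := Set.ncard_le_ncard (Set.subset_univ (Prod.fst '' X)) (Set.toFinite _)
      simpa [Set.ncard_univ] using this
    have hn : 0 < n := Fin.pos x'
    omega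
  obtain ⟨w₁, hw₁f, hw₁g⟩ := key
  -- the fiber over x contains x' and g w₁ x'
  have hxX : (x, x') ∈ X := ⟨w₀, hw₀⟩
  have hfiberx : 2 ≤ Set.ncard {b | (x, b) ∈ X} := by
    have hsub : {x', g w₁ x'} ⊆ {b | (x, b) ∈ X} := by
      rintro b hb
      rcases hb with rfl | rfl
      · exact hxX
      · exact (hXeq _).2 ⟨w₁ * w₀ * w₀⁻¹, by
          simp [map_mul, map_inv, hw₁f]⟩
    calc 2 = ({x', g w₁ x'} : Set (Fin n)).ncard := (Set.ncard_pair (Ne.symm hw₁g)).symm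
      _ ≤ _ := Set.ncard_le_ncard hsub (Set.toFinite _)
  -- every fiber has size ≥ 2
  have hfibers : ∀ a ∈ Prod.fst '' X, 2 ≤ Set.ncard {b | (a, b) ∈ X} := by
    rintro a ⟨⟨a1, b⟩, hab, rfl⟩
    obtain ⟨w, hw⟩ := (hXeq _).1 hab
    have hwa : f w x = a1 := congrArg Prod.fst hw
    have himg : (g w) '' {b | (x, b) ∈ X} ⊆ {b | ((a1, b).1, b) ∈ X} := by
      rintro b' ⟨c, hc, rfl⟩
      obtain ⟨v, hv⟩ := (hXeq _).1 hc
      have hv1 : f v x = x := congrArg Prod.fst hv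
      have hv2 : g v x' = c := congrArg Prod.snd hv
      exact (hXeq _).2 ⟨w * v, by simp [map_mul, hv1, hv2, hwa]⟩
    calc 2 ≤ Set.ncard {b | (x, b) ∈ X} := hfiberx
      _ = ((g w) '' {b | (x, b) ∈ X}).ncard :=
        (Set.ncard_image_of_injective _ (g w).injective).symm
      _ ≤ _ := Set.ncard_le_ncard himg (Set.toFinite _)
  -- D injects into fst '' X
  have hDinj : Set.InjOn Prod.fst D := by
    rintro ⟨p1, p2⟩ ⟨_, hp⟩ ⟨q1, q2⟩ ⟨_, hq⟩ h
    simp only at h hp hq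
    subst h
    simp [← hp, ← hq]
  have hDcard : D.ncard ≤ (Prod.fst '' X).ncard := by
    rw [← Set.ncard_image_of_injOn hDinj]
    exact Set.ncard_le_ncard (Set.image_mono (fun p hp => hp.1)) (Set.toFinite _)
  calc 2 * D.ncard ≤ 2 * (Prod.fst '' X).ncard := by omega
    _ ≤ X.ncard := fiber_bound X hfibers
end

section
/- Let M be a deterministic oracle algorithm on S-graphs on [n] that makes exactly q queries, where each query reveals one labelled edge. For r ≥ 0, the number of distinct 'query transcripts' (partial S-graphs H with r(H) = r that can arise as the set of edges queried on some input) is at most C(q,r)·n^r·(2q)^{q−r}, where r(H) = |V(H)| − (number of connected components of H). -/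
open scoped Classical

/-- A query–answer pair: the query `(x, (s, b))` asks for `s^{±1}_G x`
(`b = true` for `s`, `b = false` for `s⁻¹`), and the answer is a vertex. -/
abbrev QA (S : Type*) (n : ℕ) := (Fin n × (S × Bool)) × Fin n

/-- `rankOf t = |V(H)| - (number of connected components of H)`, where `H` is the
partial `S`-graph whose edges are the queried edges recorded in the transcript `t`. -/
noncomputable def rankOf {S : Type*} {n : ℕ} (t : List (QA S n)) : ℕ :=
  let V : Finset (Fin n) :=
    (t.map fun e => e.1.1).toFinset ∪ (t.map fun e => e.2).toFinset
  let G : SimpleGraph (Fin n) :=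
    SimpleGraph.fromRel fun a b => ∃ e ∈ t, e.1.1 = a ∧ e.2 = b
  V.card - (V.image fun v => G.connectedComponentMk v).card

/-- The answer to a query in the `S`-graph given by the permutations `G`. -/
def answerQ {S : Type*} {n : ℕ} (G : S → Equiv.Perm (Fin n))
    (q : Fin n × (S × Bool)) : Fin n :=
  if q.2.2 then G q.2.1 q.1 else (G q.2.1)⁻¹ q.1

/-- The transcript of the run of the deterministic oracle machine with (adaptive)
query strategy `next` on the `S`-graph `G`, after a given number of queries. -/
def runTranscript {S : Type*} {n : ℕ} (next : List (QA S n) → Fin n × (S × Bool))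
    (G : S → Equiv.Perm (Fin n)) : ℕ → List (QA S n)
  | 0 => []
  | q + 1 =>
      let t := runTranscript next G q
      t ++ [(next t, answerQ G (next t))]

open SimpleGraph

section Graph
variable {V : Type*}

def eGraph (x a : V) : SimpleGraph V := SimpleGraph.fromRel fun u v => x = u ∧ a = v

lemma eGraph_adj {x a u v : V} : (eGraph x a).Adj u v ↔ u ≠ v ∧ ((x = u ∧ a = v) ∨ (x = v ∧ a = u)) := by
  simp [eGraph, fromRel_adj]

lemma eGraph_self (x : V) : eGraph x x = ⊥ := by
  ext u v; simp only [eGraph_adj, SimpleGraph.bot_adj, iff_false]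
  rintro ⟨h, (⟨rfl, rfl⟩ | ⟨rfl, rfl⟩)⟩ <;> exact h rfl

lemma fromRel_or (r s : V → V → Prop) :
    SimpleGraph.fromRel (fun u v => r u v ∨ s u v) = SimpleGraph.fromRel r ⊔ SimpleGraph.fromRel s := by
  ext u v; simp only [fromRel_adj, sup_adj]; tauto

lemma reachable_sup_edge {G : SimpleGraph V} {x a u v : V} :
    (G ⊔ eGraph x a).Reachable u v ↔
      G.Reachable u v ∨ (G.Reachable u x ∧ G.Reachable a v) ∨ (G.Reachable u a ∧ G.Reachable x v) := by
  constructor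
  · rintro ⟨w⟩
    induction w with
    | nil => exact Or.inl (Reachable.refl _)
    | cons h p ih =>
      rename_i c d e
      rcases h with h | h
      · have hcd : G.Reachable c d := h.reachable
        rcases ih with h1 | ⟨h1, h2⟩ | ⟨h1, h2⟩
        · exact Or.inl (hcd.trans h1)
        · exact Or.inr (Or.inl ⟨hcd.trans h1, h2⟩)
        · exact Or.inr (Or.inr ⟨hcd.trans h1, h2⟩)
      · rw [eGraph_adj] at h
        rcases h with ⟨-, ⟨rfl, rfl⟩ | ⟨rfl, rfl⟩⟩
        · rcases ih with h1 | ⟨h1, h2⟩ | ⟨h1, h2⟩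
          · exact Or.inr (Or.inl ⟨Reachable.refl _, h1⟩)
          · exact Or.inr (Or.inl ⟨Reachable.refl _, h2⟩)
          · exact Or.inl h2
        · rcases ih with h1 | ⟨h1, h2⟩ | ⟨h1, h2⟩
          · exact Or.inr (Or.inr ⟨Reachable.refl _, h1⟩)
          · exact Or.inl h2
          · exact Or.inr (Or.inr ⟨Reachable.refl _, h2⟩)
  · have hmono : ∀ {c d : V}, G.Reachable c d → (G ⊔ eGraph x a).Reachable c d :=
      fun h => h.mono le_sup_left
    have hxa : (G ⊔ eGraph x a).Reachable x a := by
      by_cases hne : x = a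
      · exact hne ▸ Reachable.refl _
      · have hadj : (G ⊔ eGraph x a).Adj x a :=
          Or.inr (by rw [eGraph_adj]; exact ⟨hne, Or.inl ⟨rfl, rfl⟩⟩)
        exact hadj.reachable
    rintro (h | ⟨h1, h2⟩ | ⟨h1, h2⟩)
    · exact hmono h
    · exact ((hmono h1).trans hxa).trans (hmono h2)
    · exact ((hmono h1).trans hxa.symm).trans (hmono h2)

noncomputable local instance : DecidableEq (SimpleGraph.ConnectedComponent (G : SimpleGraph V)) :=
  Classical.decEq _

/-- image of `A` under `mk'` equals image of the `mk`-image under the induced map. -/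
lemma image_mk_sup {G G' : SimpleGraph V} (hle : G ≤ G') (A : Finset V) :
    A.image G'.connectedComponentMk =
      (A.image G.connectedComponentMk).image
        (ConnectedComponent.map (SimpleGraph.Hom.ofLE hle)) := by
  rw [Finset.image_image]
  refine Finset.image_congr fun v _ => ?_
  rfl

lemma card_image_mk_eq {G G' : SimpleGraph V} (hle : G ≤ G') (A : Finset V)
    (h : ∀ u ∈ A, ∀ v ∈ A, G'.Reachable u v → G.Reachable u v) :
    (A.image G'.connectedComponentMk).card = (A.image G.connectedComponentMk).card := by
  rw [image_mk_sup hle A]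
  apply Finset.card_image_of_injOn
  intro c1 hc1 c2 hc2 hF
  rw [Finset.mem_coe, Finset.mem_image] at hc1 hc2
  obtain ⟨u, hu, rfl⟩ := hc1
  obtain ⟨v, hv, rfl⟩ := hc2
  rw [ConnectedComponent.map_mk, ConnectedComponent.map_mk] at hF
  simp only [SimpleGraph.Hom.ofLE_apply] at hF
  exact ConnectedComponent.sound (h u hu v hv (ConnectedComponent.exact hF))
end Graph

section StepCard
variable {V : Type*} [DecidableEq V]

omit [DecidableEq V] in
lemma mk_not_mem_image {G' : SimpleGraph V} {A : Finset V} {w : V}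
    (h : ∀ u ∈ A, ¬ G'.Reachable u w) :
    G'.connectedComponentMk w ∉ A.image G'.connectedComponentMk := by
  classical
  intro hmem
  obtain ⟨u, hu, he⟩ := Finset.mem_image.1 hmem
  exact h u hu (ConnectedComponent.exact he)

lemma step_card (G : SimpleGraph V) (A : Finset V) (x a : V)
    (hiso : ∀ u, u ∉ A → ∀ v, G.Reachable u v → u = v) :
    (A ∪ {x, a}).card - ((A ∪ {x, a}).image (G ⊔ eGraph x a).connectedComponentMk).card
      = A.card - (A.image G.connectedComponentMk).card +
        (if a = x ∨ (x ∈ A ∧ a ∈ A ∧ G.Reachable x a) then 0 else 1) := by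
  classical
  have hcle : (A.image G.connectedComponentMk).card ≤ A.card := Finset.card_image_le
  by_cases hax : a = x
  · subst hax
    rw [if_pos (Or.inl rfl)]
    have hpair : ({a, a} : Finset V) = {a} := by simp
    rw [hpair, eGraph_self, sup_bot_eq]
    by_cases hx : a ∈ A
    · rw [Finset.union_eq_left.2 (Finset.singleton_subset_iff.2 hx), add_zero]
    · have hU : A ∪ {a} = insert a A := by rw [Finset.union_comm, ← Finset.insert_eq]
      have hnm : G.connectedComponentMk a ∉ A.image G.connectedComponentMk :=
        mk_not_mem_image (fun u hu hr => hx ((hiso a hx u hr.symm) ▸ hu))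
      rw [hU, Finset.card_insert_of_notMem hx, Finset.image_insert,
        Finset.card_insert_of_notMem hnm]
      omega
  · have hxa' : x ≠ a := fun h => hax h.symm
    have hadj : (G ⊔ eGraph x a).Adj x a := Or.inr (eGraph_adj.2 ⟨hxa', Or.inl ⟨rfl, rfl⟩⟩)
    have hmkxa : (G ⊔ eGraph x a).connectedComponentMk x
        = (G ⊔ eGraph x a).connectedComponentMk a := ConnectedComponent.sound hadj.reachable
    by_cases hx : x ∈ A <;> by_cases ha : a ∈ A
    · by_cases hr : G.Reachable x a
      · rw [if_pos (Or.inr ⟨hx, ha, hr⟩)]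
        have hU : A ∪ {x, a} = A :=
          Finset.union_eq_left.2 (by simp [Finset.insert_subset_iff, hx, ha])
        rw [hU, card_image_mk_eq le_sup_left A ?_, add_zero]
        intro u hu v hv hR
        rcases reachable_sup_edge.1 hR with h | ⟨h1, h2⟩ | ⟨h1, h2⟩
        · exact h
        · exact h1.trans (hr.trans h2)
        · exact h1.trans (hr.symm.trans h2)
      · rw [if_neg (by rintro (h | ⟨-, -, h3⟩); exacts [hax h, hr h3])]
        have hU : A ∪ {x, a} = A :=
          Finset.union_eq_left.2 (by simp [Finset.insert_subset_iff, hx, ha])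
        rw [hU]
        have himg := image_mk_sup (le_sup_left : G ≤ G ⊔ eGraph x a) A
        set F := ConnectedComponent.map
          (SimpleGraph.Hom.ofLE (le_sup_left : G ≤ G ⊔ eGraph x a)) with hF
        have hFmk : ∀ v : V, F (G.connectedComponentMk v)
            = (G ⊔ eGraph x a).connectedComponentMk v := fun v => rfl
        have hmka : G.connectedComponentMk a ∈ A.image G.connectedComponentMk :=
          Finset.mem_image_of_mem _ ha
        have hmkx_mem : G.connectedComponentMk x
            ∈ (A.image G.connectedComponentMk).erase (G.connectedComponentMk a) :=
          Finset.mem_erase.2 ⟨fun h => hr (ConnectedComponent.exact h),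
            Finset.mem_image_of_mem _ hx⟩
        have himg2 : A.image ((G ⊔ eGraph x a).connectedComponentMk)
            = ((A.image G.connectedComponentMk).erase (G.connectedComponentMk a)).image F := by
          rw [himg]
          conv_lhs => rw [(Finset.insert_erase hmka).symm]
          rw [Finset.image_insert]
          refine Finset.insert_eq_self.2 ?_
          have : F (G.connectedComponentMk a) = F (G.connectedComponentMk x) := by
            rw [hFmk, hFmk, hmkxa]
          rw [this]
          exact Finset.mem_image_of_mem F hmkx_mem
        have hinj : Set.InjOn F
            ((A.image G.connectedComponentMk).erase (G.connectedComponentMk a)) := by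
          intro c1 hc1 c2 hc2 hFe
          rw [Finset.mem_coe, Finset.mem_erase] at hc1 hc2
          obtain ⟨hne1, hm1⟩ := hc1
          obtain ⟨hne2, hm2⟩ := hc2
          obtain ⟨u, hu, rfl⟩ := Finset.mem_image.1 hm1
          obtain ⟨v, hv, rfl⟩ := Finset.mem_image.1 hm2
          rw [hFmk, hFmk] at hFe
          rcases reachable_sup_edge.1 (ConnectedComponent.exact hFe) with h | ⟨h1, h2⟩ | ⟨h1, h2⟩
          · exact ConnectedComponent.sound h
          · exact absurd (ConnectedComponent.sound h2.symm) hne2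
          · exact absurd (ConnectedComponent.sound h1) hne1
        rw [himg2, Finset.card_image_of_injOn hinj, Finset.card_erase_of_mem hmka]
        have hc1 : 1 ≤ (A.image G.connectedComponentMk).card := Finset.card_pos.2 ⟨_, hmka⟩
        omega
    · -- x ∈ A, a ∉ A
      rw [if_neg (by rintro (h | ⟨-, h2, -⟩); exacts [hax h, ha h2])]
      have hU : A ∪ {x, a} = insert a A := by
        ext u
        simp only [Finset.mem_union, Finset.mem_insert, Finset.mem_singleton]
        aesop
      have hins : (G ⊔ eGraph x a).connectedComponentMk a
          ∈ A.image (G ⊔ eGraph x a).connectedComponentMk := by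
        rw [← hmkxa]; exact Finset.mem_image_of_mem _ hx
      rw [hU, Finset.card_insert_of_notMem ha, Finset.image_insert,
        Finset.insert_eq_self.2 hins, card_image_mk_eq le_sup_left A ?_]
      · omega
      intro u hu v hv hR
      rcases reachable_sup_edge.1 hR with h | ⟨h1, h2⟩ | ⟨h1, h2⟩
      · exact h
      · exact absurd ((hiso a ha v h2) ▸ hv) ha
      · exact absurd ((hiso a ha u h1.symm) ▸ hu) ha
    · -- x ∉ A, a ∈ A
      rw [if_neg (by rintro (h | ⟨h1, -, -⟩); exacts [hax h, hx h1])]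
      have hU : A ∪ {x, a} = insert x A := by
        ext u
        simp only [Finset.mem_union, Finset.mem_insert, Finset.mem_singleton]
        aesop
      have hins : (G ⊔ eGraph x a).connectedComponentMk x
          ∈ A.image (G ⊔ eGraph x a).connectedComponentMk := by
        rw [hmkxa]; exact Finset.mem_image_of_mem _ ha
      rw [hU, Finset.card_insert_of_notMem hx, Finset.image_insert,
        Finset.insert_eq_self.2 hins, card_image_mk_eq le_sup_left A ?_]
      · omega
      intro u hu v hv hR
      rcases reachable_sup_edge.1 hR with h | ⟨h1, h2⟩ | ⟨h1, h2⟩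
      · exact h
      · exact absurd ((hiso x hx u h1.symm) ▸ hu) hx
      · exact absurd ((hiso x hx v h2) ▸ hv) hx
    · -- x ∉ A, a ∉ A
      rw [if_neg (by rintro (h | ⟨h1, -, -⟩); exacts [hax h, hx h1])]
      have hU : A ∪ {x, a} = insert x (insert a A) := by
        ext u
        simp only [Finset.mem_union, Finset.mem_insert, Finset.mem_singleton]
        tauto
      have hxnotin : x ∉ insert a A := by simp [hx, hxa']
      have hAim : (A.image (G ⊔ eGraph x a).connectedComponentMk).card
          = (A.image G.connectedComponentMk).card := by
        refine card_image_mk_eq le_sup_left A ?_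
        intro u hu v hv hR
        rcases reachable_sup_edge.1 hR with h | ⟨h1, h2⟩ | ⟨h1, h2⟩
        · exact h
        · exact absurd ((hiso x hx u h1.symm) ▸ hu) hx
        · exact absurd ((hiso a ha u h1.symm) ▸ hu) ha
      have hnm : (G ⊔ eGraph x a).connectedComponentMk a
          ∉ A.image (G ⊔ eGraph x a).connectedComponentMk := by
        refine mk_not_mem_image fun u hu hR => ?_
        rcases reachable_sup_edge.1 hR with h | ⟨h1, h2⟩ | ⟨h1, h2⟩
        · exact ha ((hiso a ha u h.symm) ▸ hu)
        · exact hx ((hiso x hx u h1.symm) ▸ hu)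
        · exact ha ((hiso a ha u h1.symm) ▸ hu)
      rw [hU, Finset.card_insert_of_notMem hxnotin, Finset.card_insert_of_notMem ha,
        Finset.image_insert, Finset.image_insert, hmkxa, Finset.insert_idem,
        Finset.card_insert_of_notMem hnm, hAim]
      omega

end StepCard

section Transcript
open SimpleGraph
variable {S : Type*} {n : ℕ}

/-- vertex set of the partial graph of a transcript -/
noncomputable def Vset (t : List (QA S n)) : Finset (Fin n) :=
  (t.map fun e => e.1.1).toFinset ∪ (t.map fun e => e.2).toFinset

/-- the partial graph of a transcript -/
noncomputable def Gr (t : List (QA S n)) : SimpleGraph (Fin n) :=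
  SimpleGraph.fromRel fun a b => ∃ e ∈ t, e.1.1 = a ∧ e.2 = b

lemma rankOf_eq (t : List (QA S n)) :
    rankOf t = (Vset t).card - ((Vset t).image (Gr t).connectedComponentMk).card := rfl

lemma mem_Vset {t : List (QA S n)} {v : Fin n} :
    v ∈ Vset t ↔ ∃ e ∈ t, e.1.1 = v ∨ e.2 = v := by
  simp only [Vset, Finset.mem_union, List.mem_toFinset, List.mem_map]
  constructor
  · rintro (⟨e, he, rfl⟩ | ⟨e, he, rfl⟩)
    exacts [⟨e, he, Or.inl rfl⟩, ⟨e, he, Or.inr rfl⟩]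
  · rintro ⟨e, he, (rfl | rfl)⟩
    exacts [Or.inl ⟨e, he, rfl⟩, Or.inr ⟨e, he, rfl⟩]

lemma Vset_append (p : List (QA S n)) (e : QA S n) :
    Vset (p ++ [e]) = Vset p ∪ {e.1.1, e.2} := by
  ext v
  simp only [mem_Vset, Finset.mem_union, Finset.mem_insert, Finset.mem_singleton,
    List.mem_append, List.mem_singleton]
  constructor
  · rintro ⟨e', (he' | rfl), h⟩
    · exact Or.inl ⟨e', he', h⟩
    · rcases h with h | h
      exacts [Or.inr (Or.inl h.symm), Or.inr (Or.inr h.symm)]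
  · rintro (⟨e', he', h⟩ | h | h)
    · exact ⟨e', Or.inl he', h⟩
    · exact ⟨e, Or.inr rfl, Or.inl h.symm⟩
    · exact ⟨e, Or.inr rfl, Or.inr h.symm⟩

lemma Gr_append (p : List (QA S n)) (e : QA S n) :
    Gr (p ++ [e]) = Gr p ⊔ eGraph e.1.1 e.2 := by
  have h : (fun a b => ∃ e' ∈ p ++ [e], e'.1.1 = a ∧ e'.2 = b)
      = fun a b => (∃ e' ∈ p, e'.1.1 = a ∧ e'.2 = b) ∨ (e.1.1 = a ∧ e.2 = b) := by
    funext a b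
    apply propext
    simp only [List.mem_append, List.mem_singleton]
    constructor
    · rintro ⟨e', (he' | rfl), h1, h2⟩
      exacts [Or.inl ⟨e', he', h1, h2⟩, Or.inr ⟨h1, h2⟩]
    · rintro (⟨e', he', h1, h2⟩ | ⟨h1, h2⟩)
      exacts [⟨e', Or.inl he', h1, h2⟩, ⟨e, Or.inr rfl, h1, h2⟩]
  rw [Gr, Gr, h, fromRel_or]
  rfl

lemma not_mem_Vset_isolated {t : List (QA S n)} {x : Fin n} (hx : x ∉ Vset t) :
    ∀ u, (Gr t).Reachable x u → x = u := by
  intro u h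
  obtain ⟨w⟩ := h
  cases w with
  | nil => rfl
  | cons hadj p =>
    exfalso
    apply hx
    rw [Gr, SimpleGraph.fromRel_adj] at hadj
    rcases hadj.2 with ⟨e, he, h1, -⟩ | ⟨e, he, -, h2⟩
    · exact mem_Vset.2 ⟨e, he, Or.inl h1⟩
    · exact mem_Vset.2 ⟨e, he, Or.inr h2⟩

lemma rank_nil : rankOf ([] : List (QA S n)) = 0 := by
  rw [rankOf_eq]
  have h : Vset ([] : List (QA S n)) = ∅ := by
    ext v; simp [mem_Vset]
  rw [h]
  simp

set_option maxHeartbeats 1000000 in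
lemma rank_step (p : List (QA S n)) (e : QA S n) :
    rankOf (p ++ [e]) = rankOf p +
      (if e.2 = e.1.1 ∨ (e.1.1 ∈ Vset p ∧ e.2 ∈ Vset p ∧ (Gr p).Reachable e.1.1 e.2)
        then 0 else 1) := by
  rw [rankOf_eq, rankOf_eq, Vset_append, Gr_append]
  have h := step_card (Gr p) (Vset p) e.1.1 e.2 (fun u hu v h => not_mem_Vset_isolated hu v h)
  convert h using 2
  by_cases hc : e.2 = e.1.1 ∨ (e.1.1 ∈ Vset p ∧ e.2 ∈ Vset p ∧ (Gr p).Reachable e.1.1 e.2) <;>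
    simp [hc]

end Transcript

section Machine
open SimpleGraph
variable {S : Type*} {n : ℕ}

/-- endpoint selector -/
def ep (e : QA S n) (b : Bool) : Fin n := if b then e.1.1 else e.2

/-- step `k` of transcript `t` is an "old" (non-rank-increasing) step -/
def stepOld (d : QA S n) (t : List (QA S n)) (k : ℕ) : Prop :=
  (t.getD k d).2 = (t.getD k d).1.1 ∨
    ((t.getD k d).1.1 ∈ Vset (t.take k) ∧ (t.getD k d).2 ∈ Vset (t.take k) ∧
      (Gr (t.take k)).Reachable (t.getD k d).1.1 (t.getD k d).2)

lemma exists_code {d : QA S n} {t : List (QA S n)} {q : ℕ} (k : Fin q)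
    (h : (t.getD k.1 d).2 ∈ Vset (t.take k.1)) :
    ∃ jb : Fin q × Bool, jb.1.1 < k.1 ∧ ep (t.getD jb.1.1 d) jb.2 = (t.getD k.1 d).2 := by
  obtain ⟨e, he, hor⟩ := mem_Vset.1 h
  obtain ⟨j, hj, hget⟩ := List.mem_iff_getElem.1 he
  have hjk : j < k.1 := lt_of_lt_of_le hj (by rw [List.length_take]; exact min_le_left _ _)
  have hjt : j < t.length := lt_of_lt_of_le hj (by rw [List.length_take]; exact min_le_right _ _)
  have hgt : (t.take k.1)[j] = t[j] := List.getElem_take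
  rcases hor with h1 | h2
  · refine ⟨(⟨j, hjk.trans k.2⟩, true), hjk, ?_⟩
    show (t.getD j d).1.1 = _
    rw [List.getD_eq_getElem _ _ hjt, ← hgt, hget]
    exact h1
  · refine ⟨(⟨j, hjk.trans k.2⟩, false), hjk, ?_⟩
    show (t.getD j d).2 = _
    rw [List.getD_eq_getElem _ _ hjt, ← hgt, hget]
    exact h2

/-- the code of step `k` -/
noncomputable def stepCode (d : QA S n) (t : List (QA S n)) {q : ℕ} (k : Fin q) :
    Fin n ⊕ (Fin q × Bool) :=
  if h : stepOld d t k.1 then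
    Sum.inr (if hax : (t.getD k.1 d).2 = (t.getD k.1 d).1.1 then (k, true)
      else (exists_code k ((h.resolve_left hax).2.1)).choose)
  else Sum.inl (t.getD k.1 d).2

lemma isLeft_stepCode (d : QA S n) (t : List (QA S n)) {q : ℕ} (k : Fin q) :
    (stepCode d t k).isLeft = true ↔ ¬ stepOld d t k.1 := by
  by_cases h : stepOld d t k.1 <;> simp [stepCode, h]

variable (next : List (QA S n) → Fin n × (S × Bool))

/-- decode a code sequence into a transcript -/
def decodeT {q : ℕ} (f : Fin q → Fin n ⊕ (Fin q × Bool)) : ℕ → List (QA S n)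
  | 0 => []
  | k + 1 =>
    let t := decodeT f k
    let qv := next t
    let ans : Fin n :=
      if h : k < q then
        match f ⟨k, h⟩ with
        | Sum.inl v => v
        | Sum.inr (j, b) =>
          if hj : j.1 < t.length then ep (t[j.1]'hj) b else qv.1
      else qv.1
    t ++ [(qv, ans)]

lemma run_succ (G : S → Equiv.Perm (Fin n)) (k : ℕ) :
    runTranscript next G (k + 1) = runTranscript next G k ++
      [(next (runTranscript next G k), answerQ G (next (runTranscript next G k)))] := rfl

lemma run_length (G : S → Equiv.Perm (Fin n)) : ∀ k, (runTranscript next G k).length = k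
  | 0 => rfl
  | k + 1 => by rw [run_succ, List.length_append, run_length G k]; rfl

lemma run_take (G : S → Equiv.Perm (Fin n)) {k q : ℕ} (h : k ≤ q) :
    (runTranscript next G q).take k = runTranscript next G k := by
  induction q with
  | zero =>
    obtain rfl := Nat.le_zero.1 h
    rfl
  | succ q ih =>
    rcases Nat.eq_or_lt_of_le h with rfl | hlt
    · exact List.take_of_length_le (le_of_eq (run_length next G _))
    · have hk : k ≤ q := Nat.lt_succ_iff.1 hlt
      rw [run_succ, List.take_append_of_le_length (by rw [run_length]; exact hk)]
      exact ih hk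

lemma run_getElem? (G : S → Equiv.Perm (Fin n)) {k q : ℕ} (hk : k < q) :
    (runTranscript next G q)[k]?
      = some (next (runTranscript next G k), answerQ G (next (runTranscript next G k))) := by
  induction q with
  | zero => omega
  | succ q ih =>
    rw [run_succ]
    rcases Nat.lt_succ_iff_lt_or_eq.1 hk with h | rfl
    · rw [List.getElem?_append_left (by rw [run_length]; exact h)]
      exact ih h
    · rw [List.getElem?_append_right (by rw [run_length])]
      simp [run_length]

lemma run_getElem (G : S → Equiv.Perm (Fin n)) {k q : ℕ} (hk : k < q)
    (hl : k < (runTranscript next G q).length) :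
    (runTranscript next G q)[k]'hl
      = (next (runTranscript next G k), answerQ G (next (runTranscript next G k))) := by
  have := (List.getElem?_eq_getElem hl).symm.trans (run_getElem? next G hk)
  exact Option.some.inj this

end Machine

section Decode
open SimpleGraph
variable {S : Type*} {n : ℕ} (next : List (QA S n) → Fin n × (S × Bool))

lemma decode_stepCode (d : QA S n) (G : S → Equiv.Perm (Fin n)) (q : ℕ) :
    ∀ k, k ≤ q →
      decodeT next (fun i : Fin q => stepCode d (runTranscript next G q) i) k
        = (runTranscript next G q).take k := by
  intro k
  induction k with
  | zero => intro _; simp [decodeT]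
  | succ k ih =>
    intro hk1
    have hk : k < q := hk1
    have hkq : k ≤ q := le_of_lt hk
    have hlen : k < (runTranscript next G q).length := by rw [run_length]; exact hk
    have htake : (runTranscript next G q).take k = runTranscript next G k := run_take next G hkq
    have hget : (runTranscript next G q)[k]'hlen
        = (next ((runTranscript next G q).take k),
            answerQ G (next ((runTranscript next G q).take k))) := by
      rw [htake]; exact run_getElem next G hk hlen
    have htake1 : (runTranscript next G q).take (k + 1)
        = (runTranscript next G q).take k ++ [(runTranscript next G q)[k]'hlen] := by
      rw [List.take_succ, List.getElem?_eq_getElem hlen]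
      rfl
    have hlentake : ((runTranscript next G q).take k).length = k := by
      rw [List.length_take, run_length]
      exact min_eq_left hkq
    have hgetD : (runTranscript next G q).getD k d = (runTranscript next G q)[k]'hlen :=
      List.getD_eq_getElem _ _ hlen
    rw [htake1]
    simp only [decodeT]
    rw [ih hkq]
    refine (List.append_right_inj _).2 ?_
    refine congrArg (fun z => [z]) ?_
    rw [hget]
    refine Prod.ext rfl ?_
    show (if h : k < q then _ else _) = _
    rw [dif_pos hk]
    by_cases hold : stepOld d (runTranscript next G q) k
    · by_cases hax : ((runTranscript next G q).getD k d).2 = ((runTranscript next G q).getD k d).1.1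
      · have hsc : stepCode d (runTranscript next G q) (⟨k, hk⟩ : Fin q)
            = Sum.inr ((⟨k, hk⟩ : Fin q), true) := by
          rw [stepCode, dif_pos hold, dif_pos hax]
        rw [hsc]
        show (if hj : k < ((runTranscript next G q).take k).length then _ else _) = _
        rw [dif_neg (by rw [hlentake]; exact lt_irrefl k)]
        rw [hgetD, hget] at hax
        exact hax.symm ▸ rfl
      · have hex := exists_code (d := d) (t := runTranscript next G q) (⟨k, hk⟩ : Fin q)
          ((hold.resolve_left hax).2.1)
        have hsc : stepCode d (runTranscript next G q) (⟨k, hk⟩ : Fin q)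
            = Sum.inr hex.choose := by
          rw [stepCode, dif_pos hold, dif_neg hax]
        obtain ⟨hj, hep⟩ := hex.choose_spec
        rw [hsc]
        show (if hj : hex.choose.1.1 < ((runTranscript next G q).take k).length then _ else _) = _
        rw [dif_pos (by rw [hlentake]; exact hj)]
        have hjq : hex.choose.1.1 < (runTranscript next G q).length := by
          rw [run_length]; exact hj.trans hk
        have key : ep (((runTranscript next G q).take k)[hex.choose.1.1]'(by
              rw [hlentake]; exact hj)) hex.choose.2
            = ((runTranscript next G q).getD k d).2 := by
          rw [List.getElem_take, ← List.getD_eq_getElem _ d hjq]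
          exact hep
        exact key.trans (by rw [hgetD, hget])
    · have hsc : stepCode d (runTranscript next G q) (⟨k, hk⟩ : Fin q)
          = Sum.inl ((runTranscript next G q).getD k d).2 := by
        rw [stepCode, dif_neg hold]
      rw [hsc]
      show ((runTranscript next G q).getD k d).2 = _
      rw [hgetD, hget]

lemma rank_take (d : QA S n) (t : List (QA S n)) :
    ∀ k, k ≤ t.length →
      rankOf (t.take k) = ((Finset.range k).filter fun i => ¬ stepOld d t i).card := by
  intro k
  induction k with
  | zero => intro _; simpa using rank_nil
  | succ k ih =>
    intro hk1
    have hk : k < t.length := hk1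
    have htake1 : t.take (k + 1) = t.take k ++ [t[k]'hk] := by
      rw [List.take_succ, List.getElem?_eq_getElem hk]
      rfl
    have hcond : ((t[k]'hk).2 = (t[k]'hk).1.1 ∨ ((t[k]'hk).1.1 ∈ Vset (t.take k) ∧
        (t[k]'hk).2 ∈ Vset (t.take k) ∧ (Gr (t.take k)).Reachable (t[k]'hk).1.1 (t[k]'hk).2))
          ↔ stepOld d t k := by
      rw [stepOld, List.getD_eq_getElem _ _ hk]
    rw [htake1, rank_step, ih (le_of_lt hk), Finset.range_add_one, Finset.filter_insert]
    by_cases hold : stepOld d t k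
    · rw [if_pos (hcond.2 hold), if_neg (not_not_intro hold), add_zero]
    · rw [if_neg (fun hc => hold (hcond.1 hc)), if_pos hold,
        Finset.card_insert_of_notMem (by simp)]

end Decode

section Count

/-- the codomain of the counting injection -/
abbrev Target (n q r : ℕ) : Type :=
  Σ I : {s : Finset (Fin q) // s.card = r},
    ({i : Fin q // i ∈ I.1} → Fin n) × ({i : Fin q // i ∈ (I.1)ᶜ} → Fin q × Bool)

/-- code sequences with exactly `r` left values -/
abbrev Target' (n q r : ℕ) : Type :=
  {f : Fin q → Fin n ⊕ (Fin q × Bool) //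
    ((Finset.univ : Finset (Fin q)).filter fun i => (f i).isLeft).card = r}

lemma card_Target (n q r : ℕ) :
    Nat.card (Target n q r) = Nat.choose q r * n ^ r * (2 * q) ^ (q - r) := by
  classical
  rw [Nat.card_eq_fintype_card, Fintype.card_sigma]
  have h1 : ∀ I : {s : Finset (Fin q) // s.card = r},
      Fintype.card (({i : Fin q // i ∈ I.1} → Fin n) × ({i : Fin q // i ∈ (I.1)ᶜ} → Fin q × Bool))
        = n ^ r * (2 * q) ^ (q - r) := by
    intro I
    have e1 : Fintype.card {i : Fin q // i ∈ I.1} = r := by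
      rw [Fintype.card_coe, I.2]
    have e2 : Fintype.card {i : Fin q // i ∈ (I.1)ᶜ} = q - r := by
      rw [Fintype.card_coe, Finset.card_compl, Fintype.card_fin, I.2]
    rw [Fintype.card_prod, Fintype.card_fun, Fintype.card_fun, e1, e2, Fintype.card_fin,
      Fintype.card_prod, Fintype.card_fin, Fintype.card_bool]
    ring
  rw [Finset.sum_congr rfl fun I _ => h1 I, Finset.sum_const, smul_eq_mul, Finset.card_univ,
    Fintype.card_finset_len, Fintype.card_fin, mul_assoc]

/-- the injection from code sequences into the sigma type -/
noncomputable def ψ {n q r : ℕ} (f : Target' n q r) : Target n q r :=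
  ⟨⟨(Finset.univ : Finset (Fin q)).filter fun i => (f.1 i).isLeft, f.2⟩,
    fun i => (f.1 i.1).getLeft (Finset.mem_filter.1 i.2).2,
    fun i => (f.1 i.1).getRight (by
      have h := Finset.mem_compl.1 i.2
      have h2 : ¬ (f.1 i.1).isLeft := fun hl => h (Finset.mem_filter.2 ⟨Finset.mem_univ _, hl⟩)
      exact Sum.not_isLeft.1 h2)⟩

noncomputable def unψ {n q r : ℕ} (x : Target n q r) : Fin q → Fin n ⊕ (Fin q × Bool) :=
  fun i => if h : i ∈ x.1.1 then Sum.inl (x.2.1 ⟨i, h⟩)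
    else Sum.inr (x.2.2 ⟨i, Finset.mem_compl.2 h⟩)

lemma unψ_ψ {n q r : ℕ} (f : Target' n q r) : unψ (ψ f) = f.1 := by
  funext i
  by_cases h : (f.1 i).isLeft
  · have hm : i ∈ (ψ f).1.1 := Finset.mem_filter.2 ⟨Finset.mem_univ _, h⟩
    rw [unψ, dif_pos hm]
    exact Sum.inl_getLeft _ _
  · have hm : i ∉ (ψ f).1.1 := fun hc => h (Finset.mem_filter.1 hc).2
    rw [unψ, dif_neg hm]
    exact Sum.inr_getRight _ _

lemma ψ_inj {n q r : ℕ} : Function.Injective (ψ (n := n) (q := q) (r := r)) :=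
  fun f1 f2 h => Subtype.ext (by rw [← unψ_ψ f1, ← unψ_ψ f2, h])

end Count

/-- For a deterministic oracle machine making exactly `q` queries on `S`-graphs
on `[n]`, the number of query transcripts of rank `r` that can arise is at most
`C(q,r) · n^r · (2q)^{q-r}`. -/
theorem stmt_17 {S : Type*} [Fintype S] [DecidableEq S] {n : ℕ}
    (next : List (QA S n) → Fin n × (S × Bool)) (q r : ℕ) :
    Nat.card {t : List (QA S n) |
        (∃ G : S → Equiv.Perm (Fin n), runTranscript next G q = t) ∧ rankOf t = r}
      ≤ Nat.choose q r * n ^ r * (2 * q) ^ (q - r) := by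
  classical
  rcases Nat.eq_zero_or_pos n with hn | hn
  · subst hn
    exact ((next []).1).elim0
  by_cases hS : Nonempty S
  swap
  · exact absurd ⟨(next []).2.1⟩ hS
  obtain ⟨s0⟩ := hS
  set d : QA S n := ((⟨0, hn⟩, (s0, true)), ⟨0, hn⟩) with hd
  have key : ∀ t : List (QA S n), ((∃ G, runTranscript next G q = t) ∧ rankOf t = r) →
      ((Finset.univ : Finset (Fin q)).filter fun i => (stepCode d t i).isLeft).card = r := by
    rintro t ⟨⟨G, rfl⟩, hr⟩
    have hlen : (runTranscript next G q).length = q := run_length next G q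
    have h1 := rank_take d (runTranscript next G q) q (le_of_eq hlen.symm)
    rw [List.take_of_length_le (le_of_eq hlen), hr] at h1
    rw [h1]
    refine Finset.card_bij (fun i _ => i.1) ?_ ?_ ?_
    · intro a ha
      refine Finset.mem_filter.2 ⟨Finset.mem_range.2 a.isLt, ?_⟩
      exact (isLeft_stepCode d _ a).1 (Finset.mem_filter.1 ha).2
    · intro a _ b _ hab
      exact Fin.val_injective hab
    · intro b hb
      obtain ⟨hb1, hb2⟩ := Finset.mem_filter.1 hb
      refine ⟨⟨b, Finset.mem_range.1 hb1⟩, Finset.mem_filter.2 ⟨Finset.mem_univ _, ?_⟩, rfl⟩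
      exact (isLeft_stepCode d _ ⟨b, Finset.mem_range.1 hb1⟩).2 hb2
  let φ : {t : List (QA S n) // (∃ G, runTranscript next G q = t) ∧ rankOf t = r} →
      Target' n q r := fun t => ⟨fun i => stepCode d t.1 i, key t.1 t.2⟩
  have hφ : Function.Injective φ := by
    intro t1 t2 h
    have hf : (fun i : Fin q => stepCode d t1.1 i) = fun i => stepCode d t2.1 i :=
      congrArg Subtype.val h
    obtain ⟨G1, hG1⟩ := t1.2.1
    obtain ⟨G2, hG2⟩ := t2.2.1
    have e1 : decodeT next (fun i : Fin q => stepCode d t1.1 i) q = t1.1 := by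
      have h1 := decode_stepCode next d G1 q q le_rfl
      rw [hG1, List.take_of_length_le (le_of_eq (by rw [← hG1, run_length]))] at h1
      exact h1
    have e2 : decodeT next (fun i : Fin q => stepCode d t2.1 i) q = t2.1 := by
      have h2 := decode_stepCode next d G2 q q le_rfl
      rw [hG2, List.take_of_length_le (le_of_eq (by rw [← hG2, run_length]))] at h2
      exact h2
    apply Subtype.ext
    rw [← e1, ← e2, hf]
  calc Nat.card {t : List (QA S n) |
        (∃ G : S → Equiv.Perm (Fin n), runTranscript next G q = t) ∧ rankOf t = r}
      ≤ Nat.card (Target' n q r) := Nat.card_le_card_of_injective φ hφ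
    _ ≤ Nat.card (Target n q r) := Nat.card_le_card_of_injective ψ ψ_inj
    _ = Nat.choose q r * n ^ r * (2 * q) ^ (q - r) := card_Target n q r
end
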